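/- Let g be a function analytic near 0 with g(0) = 0 satisfying the ODE g'(x)·(1 - g(x)) = x + 2·g(x). Define u(x) by g(x) = 1 - (x+2)(u(x)+1). Then u satisfies (du/dx)·(1/u + 1/u²) = -1/(x+2), with u(0) = -1/2, and consequently (1/u)·e^{1/u} = -e^{-2}(x+2). -/

import Mathlib

theorem change_of_variables_Lambert (a b : ℝ) (ha : a < 0) (hb : 0 < b)
    (g u : ℝ → ℝ)
    (hg_anal : ∀ x ∈ Set.Ioo a b, AnalyticAt ℝ g x)
    (hg0 : g 0 = 0)
    (hode : ∀ x ∈ Set.Ioo a b, deriv g x * (1 - g x) = x + 2 * g x)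
    (hu : ∀ x ∈ Set.Ioo a b, g x = 1 - (x + 2) * (u x + 1))
    (hu_ne : ∀ x ∈ Set.Ioo a b, u x ≠ 0)
    (hx2 : ∀ x ∈ Set.Ioo a b, (0 : ℝ) < x + 2) :
    u 0 = -1 / 2 ∧
    (∀ x ∈ Set.Ioo a b, deriv u x * (1 / u x + 1 / (u x) ^ 2) = -(1 / (x + 2))) ∧
    (∀ x ∈ Set.Ioo a b, (1 / u x) * Real.exp (1 / u x) = -Real.exp (-2) * (x + 2)) := by
  have hs_open : IsOpen (Set.Ioo a b) := isOpen_Ioo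
  have h0s : (0:ℝ) ∈ Set.Ioo a b := ⟨ha, hb⟩
  have hu0 : u 0 = -1/2 := by
    have h := hu 0 h0s
    rw [hg0] at h; linarith
  -- u x + 1 ≠ 0 on s
  have hup1 : ∀ x ∈ Set.Ioo a b, u x + 1 ≠ 0 := by
    intro x hx h
    have hg1 : g x = 1 := by have := hu x hx; rw [show u x + 1 = 0 from h] at this; simp at this; linarith
    have ho := hode x hx
    rw [hg1] at ho
    simp at ho
    have := hx2 x hx; linarith
  -- derivative of u
  have key : ∀ x ∈ Set.Ioo a b, HasDerivAt u
      (((-(deriv g x))*(x+2) - (1 - g x)*1)/(x+2)^2) x := by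
    intro x hx
    have hx2' := (hx2 x hx).ne'
    have hg' : HasDerivAt g (deriv g x) x := ((hg_anal x hx).differentiableAt).hasDerivAt
    have h1 : HasDerivAt (fun y => 1 - g y) (0 - deriv g x) x :=
      (hasDerivAt_const x (1:ℝ)).sub hg'
    rw [zero_sub] at h1
    have h2 : HasDerivAt (fun y : ℝ => y + 2) 1 x := (hasDerivAt_id x).add_const 2
    have h3 : HasDerivAt (fun y => (1 - g y)/(y+2) - 1)
        (((-(deriv g x))*(x+2) - (1 - g x)*1)/(x+2)^2) x := (h1.div h2 hx2').sub_const 1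
    have heq : u =ᶠ[nhds x] (fun y => (1 - g y)/(y+2) - 1) := by
      filter_upwards [hs_open.mem_nhds hx] with y hy
      have hgy := hu y hy
      have h2y := (hx2 y hy).ne'
      rw [hgy]
      field_simp
      ring
    exact h3.congr_of_eventuallyEq heq
  have part2 : ∀ x ∈ Set.Ioo a b,
      deriv u x * (1 / u x + 1 / (u x) ^ 2) = -(1 / (x + 2)) := by
    intro x hx
    have hd := key x hx
    rw [hd.deriv]
    have ho := hode x hx
    have hgu := hu x hx
    have hun := hu_ne x hx
    have hup := hup1 x hx
    have hxne := (hx2 x hx).ne'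
    rw [hgu] at ho ⊢
    field_simp
    linear_combination (-1:ℝ) * ho
  refine ⟨hu0, part2, ?_⟩
  -- part 3
  set F : ℝ → ℝ := fun y => (1/u y) * Real.exp (1/u y) / (y+2) with hF
  have hFd : ∀ x ∈ Set.Ioo a b, HasDerivAt F 0 x := by
    intro x hx
    have hun := hu_ne x hx
    have hxne := (hx2 x hx).ne'
    have hd : HasDerivAt u (deriv u x) x := by have := key x hx; rwa [this.deriv]
    have hw : HasDerivAt (fun y => 1/u y) ((0 * u x - 1 * deriv u x)/(u x)^2) x :=
      (hasDerivAt_const x (1:ℝ)).div hd hun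
    have hwe : HasDerivAt (fun y => Real.exp (1/u y))
        (Real.exp (1/u x) * ((0 * u x - 1 * deriv u x)/(u x)^2)) x := hw.exp
    have hnum : HasDerivAt (fun y => (1/u y) * Real.exp (1/u y))
        (((0 * u x - 1 * deriv u x)/(u x)^2) * Real.exp (1/u x) +
          (1/u x) * (Real.exp (1/u x) * ((0 * u x - 1 * deriv u x)/(u x)^2))) x :=
      hw.mul hwe
    have h2 : HasDerivAt (fun y : ℝ => y + 2) 1 x := (hasDerivAt_id x).add_const 2
    have hdiv := hnum.div h2 hxne
    have hz : ((((0 * u x - 1 * deriv u x)/(u x)^2) * Real.exp (1/u x) +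
          (1/u x) * (Real.exp (1/u x) * ((0 * u x - 1 * deriv u x)/(u x)^2))) * (x+2)
          - (1/u x) * Real.exp (1/u x) * 1) / (x+2)^2 = 0 := by
      have hP := part2 x hx
      field_simp at hP ⊢
      linear_combination (-(Real.exp (1/u x))) * hP
    rw [hz] at hdiv
    exact hdiv
  have hconst : ∀ x ∈ Set.Ioo a b, F x = F 0 := by
    intro x hx
    refine (convex_Ioo a b).is_const_of_fderivWithin_eq_zero
      (fun y hy => ((hFd y hy).differentiableAt).differentiableWithinAt) ?_ hx h0s
    intro y hy
    have h := (hFd y hy).hasFDerivAt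
    have : fderiv ℝ F y = ContinuousLinearMap.smulRight (1 : ℝ →L[ℝ] ℝ) 0 := h.fderiv
    rw [fderivWithin_of_isOpen hs_open hy, this]
    ext; simp
  intro x hx
  have hc := hconst x hx
  have hF0 : F 0 = -Real.exp (-2) := by
    simp only [hF, hu0]
    norm_num
    ring
  have hxne := (hx2 x hx).ne'
  have h : (1/u x) * Real.exp (1/u x) / (x+2) = -Real.exp (-2) := by rw [← hF0]; exact hc
  have := (div_eq_iff hxne).mp h
  linarith [this]
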